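/- Let C be an odd cluster in T_d and let D be the set induced by C. Then D is connected with respect to the double-neighbor relation (so if D is nonempty it is an even cluster). The same statement holds with the roles of odd and even exchanged. -/
import Mathlib


open MeasureTheory

/-- `x` has at least two `G`-neighbors in the set `B`. -/
def TwoNbrsIn {V : Type} (G : SimpleGraph V) (B : Set V) (x : V) : Prop :=
  ∃ y ∈ B, ∃ z ∈ B, y ≠ z ∧ G.Adj x y ∧ G.Adj x z

/-- `x` is an odd vertex: its graph distance to the fixed root `o` is odd. -/
def IsOddV {V : Type} (G : SimpleGraph V) (o x : V) : Prop := Odd (G.dist o x)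

/-- `x` is an even vertex: its graph distance to the fixed root `o` is even. -/
def IsEvenV {V : Type} (G : SimpleGraph V) (o x : V) : Prop := Even (G.dist o x)

/-- `S` is connected with respect to the double-neighbor relation (graph distance 2)
within `S`. -/
def DNConnected {V : Type} (G : SimpleGraph V) (S : Set V) : Prop :=
  ∀ x ∈ S, ∀ y ∈ S,
    Relation.ReflTransGen (fun a b => a ∈ S ∧ b ∈ S ∧ G.dist a b = 2) x y

/-- An odd cluster: a finite nonempty set of odd vertices, connected under the
double-neighbor relation. -/
def IsOddCluster {V : Type} (G : SimpleGraph V) (o : V) (A : Set V) : Prop :=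
  A.Finite ∧ A.Nonempty ∧ (∀ x ∈ A, IsOddV G o x) ∧ DNConnected G A

/-- An even cluster: a finite nonempty set of even vertices, connected under the
double-neighbor relation. -/
def IsEvenCluster {V : Type} (G : SimpleGraph V) (o : V) (A : Set V) : Prop :=
  A.Finite ∧ A.Nonempty ∧ (∀ x ∈ A, IsEvenV G o x) ∧ DNConnected G A

/-- Two vertex sets (of the same parity) are non-adjacent: they are disjoint and no
pair of points of the two sets is at graph distance 2 (so their graph distance
exceeds 2). -/
def NonAdj {V : Type} (G : SimpleGraph V) (A B : Set V) : Prop :=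
  Disjoint A B ∧ ∀ a ∈ A, ∀ b ∈ B, G.dist a b ≠ 2

/-- The neighborhood `N(A)` of a vertex set `A`. -/
def nbhd {V : Type} (G : SimpleGraph V) (A : Set V) : Set V := {y | ∃ x ∈ A, G.Adj x y}

/-- `Prr G A B`: the set of elements of `A` having at least two neighbors in `B`. -/
def Prr {V : Type} (G : SimpleGraph V) (A B : Set V) : Set V := {v ∈ A | TwoNbrsIn G B v}

/-- The set induced by `B`: vertices outside `B` with at least two neighbors in `B`. -/
def inducedSet {V : Type} (G : SimpleGraph V) (B : Set V) : Set V :=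
  {x | x ∉ B ∧ TwoNbrsIn G B x}

/-- `ℬ(A)`: the collection of sets `B ⊆ N(A)` such that no proper subset of `B` has the
same `Prr`-value. -/
def minimalB {V : Type} (G : SimpleGraph V) (A : Set V) : Set (Set V) :=
  {B | B ⊆ nbhd G A ∧ ∀ B' : Set V, B' ⊂ B → Prr G A B' ≠ Prr G A B}

/-- `ℬ(A, C)`: the members of `ℬ(A)` whose `Prr`-value is `C`. -/
def minimalBC {V : Type} (G : SimpleGraph V) (A C : Set V) : Set (Set V) :=
  {B | B ∈ minimalB G A ∧ Prr G A B = C}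

section aux

variable {V : Type} {G : SimpleGraph V}

open SimpleGraph

/-- In a connected acyclic graph, every path realizes the distance. -/
lemma tree_path_length (hconn : G.Connected) (hacyc : G.IsAcyclic)
    {u v : V} (p : G.Walk u v) (hp : p.IsPath) : p.length = G.dist u v := by
  haveI := Classical.decEq V
  obtain ⟨w, hw⟩ := (hconn u v).exists_walk_length_eq_dist
  have h1 : (⟨p, hp⟩ : G.Path u v) = ⟨w.bypass, w.bypass_isPath⟩ := hacyc.path_unique _ _
  have h2 : p.length = w.bypass.length := by
    simpa using congrArg (fun q : G.Path u v => q.1.length) h1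
  have h3 : w.bypass.length ≤ w.length := w.length_bypass_le
  have h4 : G.dist u v ≤ p.length := SimpleGraph.dist_le p
  omega

/-- In a tree, adjacent vertices are at distances differing by one from any root. -/
lemma tree_adj_dist (hconn : G.Connected) (hacyc : G.IsAcyclic)
    {o u v : V} (h : G.Adj u v) :
    G.dist o v = G.dist o u + 1 ∨ G.dist o u = G.dist o v + 1 := by
  haveI := Classical.decEq V
  obtain ⟨w, hw⟩ := (hconn o u).exists_walk_length_eq_dist
  have hwp : w.bypass.IsPath := w.bypass_isPath
  set p := w.bypass with hpdef
  have hplen : p.length = G.dist o u := tree_path_length hconn hacyc p hwp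
  by_cases hv : v ∈ p.support
  · right
    have hq : (p.takeUntil v hv).IsPath := hwp.takeUntil hv
    have hr : (p.dropUntil v hv).IsPath := hwp.dropUntil hv
    have hqlen : (p.takeUntil v hv).length = G.dist o v :=
      tree_path_length hconn hacyc _ hq
    have hrlen : (p.dropUntil v hv).length = G.dist v u :=
      tree_path_length hconn hacyc _ hr
    have hsplit := congrArg SimpleGraph.Walk.length (p.take_spec hv)
    rw [SimpleGraph.Walk.length_append] at hsplit
    have hvu : G.dist v u = 1 := by
      have : (SimpleGraph.Walk.cons h.symm SimpleGraph.Walk.nil : G.Walk v u).IsPath := by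
        simp [SimpleGraph.Walk.isPath_def, h.ne']
      have := tree_path_length hconn hacyc _ this
      simpa using this.symm
    omega
  · left
    have hq : (SimpleGraph.Walk.cons h.symm p.reverse : G.Walk v o).IsPath := by
      refine hwp.reverse.cons ?_
      simpa [SimpleGraph.Walk.support_reverse] using hv
    have := tree_path_length hconn hacyc _ hq
    simp only [SimpleGraph.Walk.length_cons, SimpleGraph.Walk.length_reverse] at this
    rw [SimpleGraph.dist_comm] at this
    omega

/-- Two distinct vertices with a common neighbor in a tree are at distance 2. -/
lemma tree_dist_two (hconn : G.Connected) (hacyc : G.IsAcyclic)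
    {c u w : V} (h1 : G.Adj c u) (h2 : G.Adj c w) (hne : u ≠ w) :
    G.dist u w = 2 := by
  have hp : (SimpleGraph.Walk.cons h1.symm (SimpleGraph.Walk.cons h2 SimpleGraph.Walk.nil) :
      G.Walk u w).IsPath := by
    simp [SimpleGraph.Walk.isPath_def, h1.ne', h2.ne, hne]
  have := tree_path_length hconn hacyc _ hp
  simpa using this.symm

lemma exists_midpoint (hconn : G.Connected) {u w : V} (hd : G.dist u w = 2) :
    ∃ m, G.Adj u m ∧ G.Adj m w := by
  obtain ⟨p, hp⟩ := (hconn u w).exists_walk_length_eq_dist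
  rw [hd] at hp
  cases p with
  | nil => simp at hp
  | cons h q =>
    cases q with
    | nil => simp at hp
    | cons h' r =>
      have : r.length = 0 := by simpa using hp
      have := SimpleGraph.Walk.eq_of_length_eq_zero this
      subst this
      exact ⟨_, h, h'⟩

end aux

section key
variable {V : Type} {G : SimpleGraph V}

lemma key_connected (hconn : G.Connected) (hacyc : G.IsAcyclic)
    (p : V → Prop) (hflip : ∀ u v : V, G.Adj u v → (p u ↔ ¬ p v))
    (C : Set V) (hp : ∀ x ∈ C, p x) (hDN : DNConnected G C) :
    DNConnected G (inducedSet G C) := by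
  intro x hx x' hx'
  have hxD : x ∈ inducedSet G C := hx
  have hx'D : x' ∈ inducedSet G C := hx'
  obtain ⟨hxC, y, hyC, z, hzC, hyz, hxy, hxz⟩ := hx
  obtain ⟨hx'C, y', hy'C, -, -, -, hx'y', -⟩ := hx'
  have main : ∀ c'' : V,
      Relation.ReflTransGen (fun a b => a ∈ C ∧ b ∈ C ∧ G.dist a b = 2) y c'' →
      ∀ x'' ∈ inducedSet G C, G.Adj x'' c'' →
      Relation.ReflTransGen
        (fun a b => a ∈ inducedSet G C ∧ b ∈ inducedSet G C ∧ G.dist a b = 2) x x'' := by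
    intro c'' hchain
    induction hchain with
    | refl =>
      intro x'' hx''D hadj
      by_cases hxx : x = x''
      · subst hxx; exact Relation.ReflTransGen.refl
      · exact Relation.ReflTransGen.single
          ⟨hxD, hx''D, tree_dist_two hconn hacyc hxy.symm hadj.symm hxx⟩
    | @tail b c'' hyb hstep ih =>
      obtain ⟨hbC, hc''C, hdist⟩ := hstep
      obtain ⟨m, hbm, hmc⟩ := exists_midpoint hconn hdist
      have hmC : m ∉ C := by
        intro hmc'
        exact ((hflip b m hbm).mp (hp b hbC)) (hp m hmc')
      have hbne : b ≠ c'' := by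
        intro hbc; rw [hbc, SimpleGraph.dist_self] at hdist; omega
      have hmD : m ∈ inducedSet G C :=
        ⟨hmC, b, hbC, c'', hc''C, hbne, hbm.symm, hmc⟩
      have hxm := ih m hmD hbm.symm
      intro x'' hx''D hadj
      by_cases hmx : m = x''
      · subst hmx; exact hxm
      · exact hxm.tail
          ⟨hmD, hx''D, tree_dist_two hconn hacyc hmc.symm hadj.symm hmx⟩
  exact main y' (hDN y hyC y' hy'C) x' hx'D hx'y'

end key

/-- **Lemma.** On the infinite `d`-regular tree, the set induced by an odd cluster is
connected with respect to the double-neighbor relation (hence, if nonempty, it is an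
even cluster); and the same holds with odd and even exchanged. -/
theorem induced_set_connected (d : ℕ) (hd : 3 ≤ d)
    (V : Type) (G : SimpleGraph V) (o : V)
    (hconn : G.Connected) (hacyc : G.IsAcyclic)
    (hreg : ∀ v : V, (G.neighborSet v).ncard = d) :
    (∀ C : Set V, IsOddCluster G o C → DNConnected G (inducedSet G C)) ∧
    (∀ C : Set V, IsEvenCluster G o C → DNConnected G (inducedSet G C)) := by
  constructor
  · intro C hC
    refine key_connected hconn hacyc (fun x => Odd (G.dist o x)) ?_ C hC.2.2.1 hC.2.2.2
    intro u v h
    rcases tree_adj_dist hconn hacyc (o := o) h with h1 | h1 <;>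
      · simp only [Nat.odd_iff] at *; omega
  · intro C hC
    refine key_connected hconn hacyc (fun x => Even (G.dist o x)) ?_ C hC.2.2.1 hC.2.2.2
    intro u v h
    rcases tree_adj_dist hconn hacyc (o := o) h with h1 | h1 <;>
      · simp only [Nat.even_iff] at *; omega
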